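/- Let α ≥ 1 be an integer, β ≥ 0 an integer, and γ ∈ {0,1}. Then, in ℚ, det_{1≤i,j≤α}( C(β+j, 2j−i−γ) ) = ∏_{j=1}^{α} [ (β+j)! · (j−1)! · (2β+γ+j+1)_{j−1} ] / [ (2j−1−γ)! · (β+γ+j−1)! ]. -/

import Mathlib

open Finset

/-- Binomial coefficient `C(n,k)` with integer lower index, zero when `k < 0` or `k > n`. -/
def ibinom (n k : ℤ) : ℚ :=
  if 0 ≤ k ∧ k ≤ n then (Nat.choose n.toNat k.toNat : ℚ) else 0

/-- Shifted factorial (Pochhammer) `(a)_n = a(a+1)⋯(a+n-1)`. -/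
def poch (a : ℚ) (n : ℕ) : ℚ := ∏ k ∈ Finset.range n, (a + k)

open Matrix


namespace DJ

variable {R : Type*} [CommRing R] {n : Type*} [DecidableEq n] [Fintype n]

lemma updateColumn_comm (A : Matrix n n R) {i j : n} (hij : i ≠ j) (u v : n → R) :
    (A.updateCol i u).updateCol j v = (A.updateCol j v).updateCol i u := by
  ext a b
  simp only [Matrix.updateCol_apply]
  split_ifs with h1 h2 <;> try rfl
  exact absurd (h2.symm.trans h1) hij

lemma mul_updateColumn (A M : Matrix n n R) (j : n) (c : n → R) :
    A * (M.updateCol j c) = (A * M).updateCol j (A.mulVec c) := by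
  ext a b
  simp only [Matrix.mul_apply, Matrix.updateCol_apply, Matrix.mulVec, dotProduct]
  rcases eq_or_ne b j with rfl | hbj
  · simp
  · simp [hbj]

lemma det_two_col (i j : n) (hij : i ≠ j) (u v : n → R) :
    (((1 : Matrix n n R).updateCol i u).updateCol j v).det
      = u i * v j - u j * v i := by
  set M : Matrix n n R := ((1 : Matrix n n R).updateCol i u).updateCol j v with hM
  have hMe : ∀ a b, M a b = if b = j then v a else if b = i then u a else
      (1 : Matrix n n R) a b := by
    intro a b; simp [hM, Matrix.updateCol_apply]
  have key : ∀ σ : Equiv.Perm n, σ ≠ 1 → σ ≠ Equiv.swap i j →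
      ∏ k, M (σ k) k = 0 := by
    intro σ hσ1 hσs
    have hex : ∃ k, σ k ≠ k ∧ k ≠ i ∧ k ≠ j := by
      by_contra hcon
      push_neg at hcon
      have hfix : ∀ k, k ≠ i → k ≠ j → σ k = k := by
        intro k hki hkj
        by_contra hk
        exact hkj (hcon k hk hki)
      rcases eq_or_ne (σ i) i with hii | hii
      · have hjj : σ j = j := by
          by_contra h
          have hmi : σ j ≠ i := by
            intro hc
            exact hij.symm (σ.injective (hc.trans hii.symm))
          have := hfix (σ j) hmi h
          exact h (σ.injective this)
        refine hσ1 (Equiv.ext fun k => ?_)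
        rcases eq_or_ne k i with rfl | hki
        · simpa using hii
        rcases eq_or_ne k j with rfl | hkj
        · simpa using hjj
        · simpa using hfix k hki hkj
      · have hijv : σ i = j := by
          by_contra h
          have := hfix (σ i) hii h
          exact hii (σ.injective this)
        have hji : σ j = i := by
          have hjj : σ j ≠ j := by
            intro hc
            exact hij (σ.injective (hijv.trans hc.symm))
          by_contra h
          have := hfix (σ j) h hjj
          exact hjj (σ.injective this)
        refine hσs (Equiv.ext fun k => ?_)
        rcases eq_or_ne k i with rfl | hki
        · rw [hijv, Equiv.swap_apply_left]
        rcases eq_or_ne k j with rfl | hkj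
        · rw [hji, Equiv.swap_apply_right]
        · rw [hfix k hki hkj, Equiv.swap_apply_of_ne_of_ne hki hkj]
    obtain ⟨k, hk, hki, hkj⟩ := hex
    refine Finset.prod_eq_zero (Finset.mem_univ k) ?_
    rw [hMe, if_neg hkj, if_neg hki]
    exact Matrix.one_apply_ne hk
  have h1s : (1 : Equiv.Perm n) ≠ Equiv.swap i j := by
    intro h
    have : i = Equiv.swap i j i := by rw [← h]; rfl
    rw [Equiv.swap_apply_left] at this
    exact hij this
  rw [Matrix.det_apply]
  rw [← Finset.sum_subset (Finset.subset_univ ({1, Equiv.swap i j} : Finset (Equiv.Perm n)))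
    (fun σ _ hσ => ?_)]
  · rw [Finset.sum_pair h1s]
    have hprod1 : ∏ k, M ((1 : Equiv.Perm n) k) k = v j * (u i * 1) := by
      simp only [Equiv.Perm.one_apply]
      rw [← Finset.mul_prod_erase Finset.univ (fun k => M k k) (Finset.mem_univ j)]
      rw [← Finset.mul_prod_erase _ (fun k => M k k)
        (Finset.mem_erase.mpr ⟨hij, Finset.mem_univ i⟩)]
      rw [hMe, if_pos rfl, hMe, if_neg hij, if_pos rfl]
      congr 2
      refine Finset.prod_eq_one fun k hk => ?_
      obtain ⟨hki, hkj⟩ : k ≠ i ∧ k ≠ j := by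
        simpa [Finset.mem_erase] using hk
      rw [hMe, if_neg hkj, if_neg hki]
      exact Matrix.one_apply_eq k
    have hprod2 : ∏ k, M (Equiv.swap i j k) k = v i * (u j * 1) := by
      rw [← Finset.mul_prod_erase Finset.univ (fun k => M (Equiv.swap i j k) k)
        (Finset.mem_univ j)]
      rw [← Finset.mul_prod_erase _ (fun k => M (Equiv.swap i j k) k)
        (Finset.mem_erase.mpr ⟨hij, Finset.mem_univ i⟩)]
      simp only [Equiv.swap_apply_left, Equiv.swap_apply_right]
      rw [hMe, if_pos rfl, hMe, if_neg hij, if_pos rfl]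
      congr 2
      refine Finset.prod_eq_one fun k hk => ?_
      obtain ⟨hki, hkj⟩ : k ≠ i ∧ k ≠ j := by
        simpa [Finset.mem_erase] using hk
      rw [Equiv.swap_apply_of_ne_of_ne hki hkj, hMe, if_neg hkj, if_neg hki]
      exact Matrix.one_apply_eq k
    rw [hprod1, hprod2, Equiv.Perm.sign_one, Equiv.Perm.sign_swap hij]
    simp only [one_smul, Units.neg_smul]
    ring
  · have hσ1 : σ ≠ 1 := by
      intro h; exact hσ (by simp [h])
    have hσs : σ ≠ Equiv.swap i j := by
      intro h; exact hσ (by simp [h])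
    rw [key σ hσ1 hσs, smul_zero]


lemma submatrix_updateColumn_inj {m₁ m₂ n₁ n₂ : Type*} [DecidableEq n₁] [DecidableEq n₂]
    (A : Matrix m₁ n₁ R) (e : m₂ → m₁) (f : n₂ → n₁) (hf : Function.Injective f)
    (j : n₂) (c : m₁ → R) :
    (A.updateCol (f j) c).submatrix e f
      = (A.submatrix e f).updateCol j (c ∘ e) := by
  ext a b
  simp only [Matrix.submatrix_apply, Matrix.updateCol_apply]
  rcases eq_or_ne b j with rfl | hbj
  · rw [if_pos rfl, if_pos rfl]; rfl
  · rw [if_neg (fun h => hbj (hf h)), if_neg hbj]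

lemma det_updateColumn_single {m : ℕ} (A : Matrix (Fin (m+1)) (Fin (m+1)) R)
    (r c : Fin (m+1)) :
    (A.updateCol c (Pi.single r 1)).det
      = (-1) ^ (r + c : ℕ) * (A.submatrix r.succAbove c.succAbove).det := by
  have h1 : (A.updateCol c (Pi.single r 1)).det
      = (Aᵀ.updateRow c (Pi.single r 1)).det := by
    rw [Matrix.updateRow_transpose, Matrix.det_transpose]
  rw [h1, ← Matrix.adjugate_apply, Matrix.adjugate_fin_succ_eq_det_submatrix]
  congr 1
  · rw [add_comm]
  · rw [← Matrix.det_transpose, Matrix.transpose_submatrix, Matrix.transpose_transpose]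

lemma desnanot_jacobi_aux {m : ℕ} {S : Type*} [CommRing S] [IsDomain S]
    (A : Matrix (Fin (m+2)) (Fin (m+2)) S) (hd : A.det ≠ 0) :
    A.det * (A.submatrix (Fin.succ ∘ Fin.castSucc) (Fin.succ ∘ Fin.castSucc)).det =
      (A.submatrix Fin.succ Fin.succ).det * (A.submatrix Fin.castSucc Fin.castSucc).det -
      (A.submatrix Fin.succ Fin.castSucc).det * (A.submatrix Fin.castSucc Fin.succ).det := by
  set l : Fin (m+2) := Fin.last (m+1) with hl
  have h0l : (0 : Fin (m+2)) ≠ l := by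
    simp [hl, Fin.ext_iff]
  set c0 : Fin (m+2) → S := fun i => A.adjugate i 0 with hc0
  set cl : Fin (m+2) → S := fun i => A.adjugate i l with hcl
  set T : Matrix (Fin (m+2)) (Fin (m+2)) S :=
    ((1 : Matrix (Fin (m+2)) (Fin (m+2)) S).updateCol 0 c0).updateCol l cl with hT
  have hdetT : T.det = c0 0 * cl l - c0 l * cl 0 := det_two_col 0 l h0l c0 cl
  -- compute A * T
  have hmv0 : A.mulVec c0 = A.det • ((Pi.single (0 : Fin (m+2)) (1:S)) : Fin (m+2) → S) := by
    funext i
    have : A.mulVec c0 i = (A * A.adjugate) i 0 := by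
      simp [Matrix.mulVec, Matrix.mul_apply, dotProduct, hc0]
    rw [this, Matrix.mul_adjugate]
    simp [Matrix.one_apply, Pi.single_apply]
  have hmvl : A.mulVec cl = A.det • ((Pi.single l (1:S)) : Fin (m+2) → S) := by
    funext i
    have : A.mulVec cl i = (A * A.adjugate) i l := by
      simp [Matrix.mulVec, Matrix.mul_apply, dotProduct, hcl]
    rw [this, Matrix.mul_adjugate]
    simp [Matrix.one_apply, Pi.single_apply]
  have hAT : A * T = ((A.updateCol 0 (A.det • ((Pi.single (0 : Fin (m+2)) (1:S)) : Fin (m+2) → S))).updateCol l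
      (A.det • ((Pi.single l (1:S)) : Fin (m+2) → S))) := by
    rw [hT, mul_updateColumn, mul_updateColumn, mul_one, hmv0, hmvl]
  -- det (A * T) = det A ^ 2 * det inner
  have hsub1 : ((A.updateCol l (Pi.single l 1)).updateCol 0 (Pi.single 0 1)).det
      = (A.submatrix (Fin.succ ∘ Fin.castSucc) (Fin.succ ∘ Fin.castSucc)).det := by
    rw [det_updateColumn_single]
    have e1 : ((0 : Fin (m+2))).succAbove = Fin.succ := Fin.succAbove_zero
    rw [e1]
    have hll : l = Fin.succ (Fin.last m) := by
      rw [hl, Fin.succ_last]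
    have e2 : (A.updateCol l (Pi.single l 1)).submatrix Fin.succ Fin.succ
        = (A.submatrix Fin.succ Fin.succ).updateCol (Fin.last m)
          ((Pi.single l (1:S)) ∘ Fin.succ) := by
      rw [hll, submatrix_updateColumn_inj _ _ _ (Fin.succ_injective _)]
    rw [e2]
    have e3 : ((Pi.single l (1:S)) ∘ Fin.succ) = Pi.single (Fin.last m) (1:S) := by
      funext i
      simp only [Function.comp_apply, Pi.single_apply, hll]
      rcases eq_or_ne i (Fin.last m) with rfl | h
      · simp
      · rw [if_neg (by simpa [Fin.succ_inj] using h), if_neg h]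
    rw [e3, det_updateColumn_single]
    have e4 : (Fin.last m).succAbove = Fin.castSucc := Fin.succAbove_last
    rw [e4, Matrix.submatrix_submatrix]
    simp
  have hdetAT : (A * T).det = A.det * (A.det *
      (A.submatrix (Fin.succ ∘ Fin.castSucc) (Fin.succ ∘ Fin.castSucc)).det) := by
    rw [hAT, Matrix.det_updateCol_smul,
      updateColumn_comm _ h0l, Matrix.det_updateCol_smul, hsub1]
  -- the two evaluations
  have hkey : A.det * T.det = A.det * (A.det *
      (A.submatrix (Fin.succ ∘ Fin.castSucc) (Fin.succ ∘ Fin.castSucc)).det) := by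
    rw [← Matrix.det_mul, hdetAT]
  have hcancel : T.det = A.det *
      (A.submatrix (Fin.succ ∘ Fin.castSucc) (Fin.succ ∘ Fin.castSucc)).det :=
    mul_left_cancel₀ hd hkey
  rw [← hcancel, hdetT]
  -- express adjugate corners as corner minors
  have ha00 : c0 0 = (A.submatrix Fin.succ Fin.succ).det := by
    show A.adjugate 0 0 = _
    rw [Matrix.adjugate_fin_succ_eq_det_submatrix]
    simp [Fin.succAbove_zero]
  have hall : cl l = (A.submatrix Fin.castSucc Fin.castSucc).det := by
    show A.adjugate l l = _
    rw [Matrix.adjugate_fin_succ_eq_det_submatrix, hl]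
    have : (Fin.last (m+1)).succAbove = Fin.castSucc := Fin.succAbove_last
    rw [this]
    have hpow : (-1 : S) ^ ((Fin.last (m+1) : Fin (m+2)) + (Fin.last (m+1) : Fin (m+2)) : ℕ)
        = 1 := by
      rw [← two_mul]
      exact Even.neg_one_pow ⟨_, (two_mul _)⟩
    rw [hpow, one_mul]
  have ha0l : c0 l = (-1 : S) ^ ((l : ℕ)) * (A.submatrix Fin.succ Fin.castSucc).det := by
    show A.adjugate l 0 = _
    rw [Matrix.adjugate_fin_succ_eq_det_submatrix]
    have e1 : ((0 : Fin (m+2))).succAbove = Fin.succ := Fin.succAbove_zero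
    have e2 : (l : Fin (m+2)).succAbove = Fin.castSucc := by rw [hl]; exact Fin.succAbove_last
    rw [e1, e2]
    norm_num
  have hal0 : cl 0 = (-1 : S) ^ ((l : ℕ)) * (A.submatrix Fin.castSucc Fin.succ).det := by
    show A.adjugate 0 l = _
    rw [Matrix.adjugate_fin_succ_eq_det_submatrix]
    have e1 : ((0 : Fin (m+2))).succAbove = Fin.succ := Fin.succAbove_zero
    have e2 : (l : Fin (m+2)).succAbove = Fin.castSucc := by rw [hl]; exact Fin.succAbove_last
    rw [e1, e2]
    norm_num
  rw [ha00, hall, ha0l, hal0]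
  have hsq : ((-1 : S) ^ ((l : ℕ))) * ((-1 : S) ^ ((l : ℕ))) = 1 := by
    rw [← pow_add, ← two_mul]
    exact Even.neg_one_pow ⟨_, (two_mul _)⟩
  linear_combination
    (-((A.submatrix Fin.succ Fin.castSucc).det * (A.submatrix Fin.castSucc Fin.succ).det)) * hsq

theorem desnanot_jacobi {m : ℕ} (A : Matrix (Fin (m+2)) (Fin (m+2)) R) :
    A.det * (A.submatrix (Fin.succ ∘ Fin.castSucc) (Fin.succ ∘ Fin.castSucc)).det =
      (A.submatrix Fin.succ Fin.succ).det * (A.submatrix Fin.castSucc Fin.castSucc).det -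
      (A.submatrix Fin.succ Fin.castSucc).det * (A.submatrix Fin.castSucc Fin.succ).det := by
  let A' := Matrix.mvPolynomialX (Fin (m+2)) (Fin (m+2)) ℤ
  have h := desnanot_jacobi_aux A' (Matrix.det_mvPolynomialX_ne_zero _ ℤ)
  let φ : MvPolynomial (Fin (m+2) × Fin (m+2)) ℤ →+* R :=
    (MvPolynomial.aeval (fun p : Fin (m+2) × Fin (m+2) => A p.1 p.2)).toRingHom
  have happ := congrArg φ h
  have hmap : φ.mapMatrix A' = A := by
    ext i j
    simp [A', φ, Matrix.mvPolynomialX]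
  have hmap' : A'.map φ = A := hmap
  have hsubdet' : ∀ {k : ℕ} (e f : Fin k → Fin (m+2)),
      φ ((A'.submatrix e f).det) = ((A.submatrix e f)).det := by
    intro k e f
    rw [RingHom.map_det]
    congr 1
    rw [RingHom.mapMatrix_apply, ← Matrix.submatrix_map, hmap']
  have hdet : φ A'.det = A.det := by
    rw [RingHom.map_det]
    congr 1
  simpa [_root_.map_mul, map_sub, hdet, hsubdet'] using happ

end DJ



namespace DetFam

def tterm (β : ℕ) (γ : ℤ) (j : ℕ) : ℚ :=
  ((β + j).factorial : ℚ) * ((j - 1).factorial : ℚ)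
    * poch (2*(β:ℚ) + (γ:ℚ) + (j:ℚ) + 1) (j-1)
    / (((2*(j:ℤ) - 1 - γ).toNat.factorial : ℚ) * (((β:ℤ) + γ + (j:ℤ) - 1).toNat.factorial : ℚ))

def Fprod (α : ℕ) (β : ℕ) (γ : ℤ) : ℚ := ∏ j ∈ Finset.Icc 1 α, tterm β γ j

def Fval (α : ℕ) (β : ℕ) (γ : ℤ) : ℚ :=
  if (0 ≤ (β:ℤ) + γ ∧ γ ≤ 1) ∨ α = 0 then Fprod α β γ else 0

lemma poch_succ (a : ℚ) (n : ℕ) : poch a (n+1) = poch a n * (a + n) :=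
  Finset.prod_range_succ _ _

lemma poch_shift (a : ℚ) (n : ℕ) : a * poch (a+1) n = poch a n * (a + n) := by
  induction n with
  | zero => simp [poch]
  | succ n ih =>
    rw [poch_succ, poch_succ]
    push_cast
    have : a * (poch (a + 1) n * (a + 1 + n)) = (a * poch (a+1) n) * (a + 1 + n) := by ring
    rw [this, ih]
    ring

lemma poch_pos {a : ℚ} (h : 0 < a) (n : ℕ) : 0 < poch a n := by
  refine Finset.prod_pos fun k _ => ?_
  positivity

lemma fact_toNat_step {m : ℤ} (h : 0 ≤ m) :
    (((m+1).toNat).factorial : ℚ) = ((m : ℚ) + 1) * ((m.toNat).factorial : ℚ) := by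
  have h1 : (m+1).toNat = m.toNat + 1 := by omega
  have h2 : ((m.toNat : ℕ) : ℚ) = (m : ℚ) := by
    exact_mod_cast congrArg (fun z : ℤ => (z : ℚ)) (Int.toNat_of_nonneg h)
  rw [h1, Nat.factorial_succ]
  push_cast
  rw [h2]

lemma tterm_pos {β j : ℕ} {γ : ℤ} (hγ : γ ≤ 1) (hβγ : 0 ≤ (β:ℤ)+γ) :
    0 < tterm β γ j := by
  unfold tterm
  have hb : (0:ℚ) < 2*(β:ℚ) + (γ:ℚ) + (j:ℚ) + 1 := by
    have h1 : ((β:ℚ) + (γ:ℚ)) ≥ 0 := by exact_mod_cast hβγ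
    have h2 : (0:ℚ) ≤ (β:ℚ) := by positivity
    have h3 : (0:ℚ) ≤ (j:ℚ) := by positivity
    nlinarith
  have := poch_pos hb (j-1)
  have f1 : (0:ℚ) < ((β + j).factorial : ℚ) := by exact_mod_cast (β+j).factorial_pos
  have f2 : (0:ℚ) < ((j-1).factorial : ℚ) := by exact_mod_cast (j-1).factorial_pos
  have f3 : (0:ℚ) < (((2*(j:ℤ) - 1 - γ).toNat.factorial : ℚ)) := by
    exact_mod_cast (2*(j:ℤ) - 1 - γ).toNat.factorial_pos
  have f4 : (0:ℚ) < ((((β:ℤ) + γ + (j:ℤ) - 1).toNat.factorial : ℚ)) := by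
    exact_mod_cast ((β:ℤ) + γ + (j:ℤ) - 1).toNat.factorial_pos
  positivity

lemma Fprod_pos {α β : ℕ} {γ : ℤ} (hγ : γ ≤ 1) (hβγ : 0 ≤ (β:ℤ)+γ) :
    0 < Fprod α β γ :=
  Finset.prod_pos fun _ _ => tterm_pos hγ hβγ

lemma Fprod_succ (n β : ℕ) (γ : ℤ) :
    Fprod (n+1) β γ = Fprod n β γ * tterm β γ (n+1) := by
  unfold Fprod
  rw [Finset.prod_Icc_succ_top (by omega)]

-- P1 : gamma-shift single-term identity
lemma P1 {β j : ℕ} {γ : ℤ} (hj : 1 ≤ j) (hγ : γ ≤ 0) (hβγ : 0 ≤ (β:ℤ)+γ) :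
    tterm β (γ+1) j * (((β:ℚ)+(γ:ℚ)+(j:ℚ)) * (2*(β:ℚ)+(γ:ℚ)+(j:ℚ)+1)) =
    tterm β γ j * ((2*(j:ℚ)-1-(γ:ℚ)) * (2*(β:ℚ)+(γ:ℚ)+2*(j:ℚ))) := by
  have hx : ((j - 1 : ℕ) : ℚ) = (j:ℚ) - 1 := by
    rw [Nat.cast_sub hj, Nat.cast_one]
  unfold tterm
  have e1 : (2*(j:ℤ) - 1 - γ) = (2*(j:ℤ) - 1 - (γ+1)) + 1 := by ring
  have e2 : ((β:ℤ) + (γ+1) + (j:ℤ) - 1) = ((β:ℤ) + γ + (j:ℤ) - 1) + 1 := by ring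
  rw [e1, e2, fact_toNat_step (by omega), fact_toNat_step (by omega)]
  have hps := poch_shift (2*(β:ℚ)+(γ:ℚ)+(j:ℚ)+1) (j-1)
  rw [hx] at hps
  push_cast
  rw [show (2 * (β:ℚ) + ((γ:ℚ) + 1) + (j:ℚ) + 1) = (2 * (β:ℚ) + (γ:ℚ) + (j:ℚ) + 1 + 1) from by ring]
  have n1 : ((2 * (j:ℤ) - 1 - (γ+1)).toNat.factorial : ℚ) ≠ 0 := by
    exact_mod_cast (Nat.factorial_pos _).ne'
  have n2 : (((β:ℤ) + γ + (j:ℤ) - 1).toNat.factorial : ℚ) ≠ 0 := by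
    exact_mod_cast (Nat.factorial_pos _).ne'
  have n3 : ((β:ℚ) + (γ:ℚ) + (j:ℚ) - 1 + 1) ≠ 0 := by
    intro h
    have : (β:ℚ) + (γ:ℚ) = -(j:ℚ) := by linarith
    have hj' : (1:ℚ) ≤ (j:ℚ) := by exact_mod_cast hj
    have hbg : (0:ℚ) ≤ (β:ℚ) + (γ:ℚ) := by exact_mod_cast hβγ
    linarith
  have n4 : (2 * (j:ℚ) - 1 - ((γ:ℚ) + 1) + 1) ≠ 0 := by
    intro h
    have hj' : (1:ℚ) ≤ (j:ℚ) := by exact_mod_cast hj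
    have hg' : (γ:ℚ) ≤ 0 := by exact_mod_cast hγ
    linarith
  field_simp
  have h5 : (0:ℚ) < (β:ℚ) + (γ:ℚ) + (j:ℚ) := by
    have hj' : (1:ℚ) ≤ (j:ℚ) := by exact_mod_cast hj
    have hbg : (0:ℚ) ≤ (β:ℚ) + (γ:ℚ) := by exact_mod_cast hβγ
    linarith
  have nf : ((((((β:ℤ) + γ + (j:ℤ)).toNat - 1)).factorial : ℚ)) ≠ 0 := by
    exact_mod_cast (Nat.factorial_pos _).ne'
  linear_combination (((β:ℚ) + (γ:ℚ) + (j:ℚ)) * (2 * (j:ℚ) - 1 - ((γ:ℚ) + 1) + 1)) * hps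

-- P3 : diagonal step identity
lemma P3 {α β : ℕ} {γ : ℤ} (hγ : γ ≤ 1) (hβγ : 0 ≤ (β:ℤ)+γ) :
    tterm β γ (α+2) * ((2*(α:ℚ)+3-(γ:ℚ)) * ((β:ℚ)+(γ:ℚ)+(α:ℚ)+1)) =
    tterm (β+1) (γ-1) (α+1) * (((α:ℚ)+1) * (2*(β:ℚ)+(γ:ℚ)+2*(α:ℚ)+3)) := by
  unfold tterm
  have eβ : (β+1) + (α+1) = β + (α+2) := by ring
  have ej1 : (α+2) - 1 = α+1 := rfl
  have ej2 : (α+1) - 1 = α := rfl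
  rw [eβ, ej1, ej2]
  have e1 : (2*((α+2 : ℕ):ℤ) - 1 - γ) = (2*((α+1 : ℕ):ℤ) - 1 - (γ-1)) + 1 := by
    push_cast; ring
  have e2 : ((β:ℤ) + γ + ((α+2 : ℕ):ℤ) - 1) = (((β+1 : ℕ):ℤ) + (γ-1) + ((α+1 : ℕ):ℤ) - 1) + 1 := by
    push_cast; ring
  rw [e1, e2, fact_toNat_step (by push_cast; omega), fact_toNat_step (by push_cast; omega)]
  rw [Nat.factorial_succ (α)]
  have hb : (2*((β+1:ℕ):ℚ) + ((γ:ℚ) - 1) + ((α+1:ℕ):ℚ) + 1) = 2*(β:ℚ) + (γ:ℚ) + ((α+2:ℕ):ℚ) + 1 := by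
    push_cast; ring
  have hq := poch_succ (2*(β:ℚ) + (γ:ℚ) + ((α+2:ℕ):ℚ) + 1) α
  push_cast
  push_cast at hq
  rw [show (2 * ((β:ℚ) + 1) + ((γ:ℚ) - 1) + ((α:ℚ) + 1) + 1) = (2 * (β:ℚ) + (γ:ℚ) + ((α:ℚ) + 2) + 1) from by ring]
  set F1 : ℚ := (((2 * ((α:ℤ) + 1) - 1 - (γ - 1)).toNat.factorial : ℚ)) with hF1
  set F2 : ℚ := ((((β:ℤ) + 1 + (γ - 1) + ((α:ℤ) + 1) - 1).toNat.factorial : ℚ)) with hF2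
  have hF1p : F1 ≠ 0 := by rw [hF1]; exact_mod_cast (Nat.factorial_pos _).ne'
  have hF2p : F2 ≠ 0 := by rw [hF2]; exact_mod_cast (Nat.factorial_pos _).ne'
  have hSx : (2 * ((α:ℚ) + 1) - 1 - ((γ:ℚ) - 1) + 1) ≠ 0 := by
    have : (γ:ℚ) ≤ 1 := by exact_mod_cast hγ
    have : (0:ℚ) ≤ (α:ℚ) := by positivity
    linarith
  have hBx : ((β:ℚ) + 1 + ((γ:ℚ) - 1) + ((α:ℚ) + 1) - 1 + 1) ≠ 0 := by
    have h1 : (0:ℚ) ≤ (β:ℚ) + (γ:ℚ) := by exact_mod_cast hβγ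
    have : (0:ℚ) ≤ (α:ℚ) := by positivity
    linarith
  rw [div_mul_eq_mul_div, div_mul_eq_mul_div, div_eq_div_iff
    (mul_ne_zero (mul_ne_zero hSx hF1p) (mul_ne_zero hBx hF2p)) (mul_ne_zero hF1p hF2p)]
  linear_combination (((β + (α + 2)).factorial : ℚ) * ((α).factorial : ℚ) * F1 * F2
    * (((α:ℚ) + 1) * ((2 * ((α:ℚ) + 1) - 1 - ((γ:ℚ) - 1) + 1) * ((β:ℚ) + 1 + ((γ:ℚ) - 1) + ((α:ℚ) + 1) - 1 + 1)))) * hq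

lemma tele (β : ℕ) (γ : ℤ) (hγ : γ ≤ 0) (hβγ : 1 ≤ (β:ℤ)+γ) (n : ℕ) :
    Fprod n β (γ+1) * Fprod n (β+1) (γ-2) * ((2*(n:ℚ)+1-(γ:ℚ)) * ((β:ℚ)+(γ:ℚ)+(n:ℚ)))
    = Fprod n β γ * Fprod n (β+1) (γ-1) * ((1-(γ:ℚ)) * ((β:ℚ)+(γ:ℚ))) := by
  induction n with
  | zero =>
    have he : Finset.Icc 1 0 = (∅ : Finset ℕ) := rfl
    simp only [Fprod, he, Finset.prod_empty, Nat.cast_zero]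
    ring
  | succ n ih =>
    rw [Fprod_succ, Fprod_succ, Fprod_succ, Fprod_succ]
    have hP1 := P1 (β := β) (γ := γ) (j := n+1) (by omega) hγ (by omega)
    have hP2 := P1 (β := β+1) (γ := γ-2) (j := n+1) (by omega) (by omega) (by push_cast; omega)
    have hg : γ - 2 + 1 = γ - 1 := by ring
    rw [hg] at hP2
    push_cast at hP1 hP2 ih ⊢
    have hX1 : (((β:ℚ)+(γ:ℚ)+((n:ℚ)+1)) * (2*(β:ℚ)+(γ:ℚ)+((n:ℚ)+1)+1)) ≠ 0 := by
      have c1 : (1:ℚ) ≤ (β:ℚ)+(γ:ℚ) := by exact_mod_cast hβγ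
      have c2 : (0:ℚ) ≤ (β:ℚ) := by positivity
      have c3 : (0:ℚ) ≤ (n:ℚ) := by positivity
      have cg : (γ:ℚ) ≤ 0 := by exact_mod_cast hγ
      have : (0:ℚ) < ((β:ℚ)+(γ:ℚ)+((n:ℚ)+1)) := by linarith
      have h2 : (0:ℚ) < (2*(β:ℚ)+(γ:ℚ)+((n:ℚ)+1)+1) := by linarith
      positivity
    have hY2 : ((2*((n:ℚ)+1)-1-((γ:ℚ)-2)) * (2*((β:ℚ)+1)+((γ:ℚ)-2)+2*((n:ℚ)+1))) ≠ 0 := by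
      have c1 : (1:ℚ) ≤ (β:ℚ)+(γ:ℚ) := by exact_mod_cast hβγ
      have c2 : (0:ℚ) ≤ (β:ℚ) := by positivity
      have c3 : (0:ℚ) ≤ (n:ℚ) := by positivity
      have cg : (γ:ℚ) ≤ 0 := by exact_mod_cast hγ
      have h1 : (0:ℚ) < (2*((n:ℚ)+1)-1-((γ:ℚ)-2)) := by linarith
      have h2 : (0:ℚ) < (2*((β:ℚ)+1)+((γ:ℚ)-2)+2*((n:ℚ)+1)) := by linarith
      positivity
    refine mul_right_cancel₀ (mul_ne_zero hX1 hY2) ?_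
    linear_combination
      (Fprod n β (γ+1) * Fprod n (β+1) (γ-2)
        * ((2*((n:ℚ)+1)+1-(γ:ℚ)) * ((β:ℚ)+(γ:ℚ)+((n:ℚ)+1)))
        * ((2*((n:ℚ)+1)-1-((γ:ℚ)-2)) * (2*((β:ℚ)+1)+((γ:ℚ)-2)+2*((n:ℚ)+1)))
        * tterm (β+1) (γ-2) (n+1)) * hP1
      + (-(Fprod n β (γ+1) * Fprod n (β+1) (γ-2)
        * ((2*((n:ℚ)+1)+1-(γ:ℚ)) * ((β:ℚ)+(γ:ℚ)+((n:ℚ)+1)))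
        * tterm β γ (n+1)
        * ((2*((n:ℚ)+1)-1-(γ:ℚ)) * (2*(β:ℚ)+(γ:ℚ)+2*((n:ℚ)+1))))) * hP2
      + (tterm β γ (n+1) * tterm (β+1) (γ-1) (n+1)
        * ((2*((n:ℚ)+1)+1-(γ:ℚ)) * ((β:ℚ)+(γ:ℚ)+((n:ℚ)+1)))
        * ((2*(β:ℚ)+(γ:ℚ)+2*((n:ℚ)+1)) * (2*(β:ℚ)+(γ:ℚ)+((n:ℚ)+1)+1))) * ih

lemma scalar_identity (α β : ℕ) (γ : ℤ) (hγ : γ ≤ 1) (hβγ : 0 ≤ (β:ℤ)+γ) :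
    Fval (α+2) β γ * Fval α (β+1) (γ-1) =
    Fval (α+1) (β+1) (γ-1) * Fval (α+1) β γ -
    Fval (α+1) β (γ+1) * Fval (α+1) (β+1) (γ-2) := by
  have g1 : Fval (α+2) β γ = Fprod (α+2) β γ := if_pos (Or.inl ⟨hβγ, hγ⟩)
  have g2 : Fval α (β+1) (γ-1) = Fprod α (β+1) (γ-1) :=
    if_pos (Or.inl ⟨by push_cast; omega, by omega⟩)
  have g3 : Fval (α+1) (β+1) (γ-1) = Fprod (α+1) (β+1) (γ-1) :=
    if_pos (Or.inl ⟨by push_cast; omega, by omega⟩)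
  have g4 : Fval (α+1) β γ = Fprod (α+1) β γ := if_pos (Or.inl ⟨hβγ, hγ⟩)
  rw [g1, g2, g3, g4]
  have hP3 := P3 (α := α) (β := β) (γ := γ) hγ hβγ
  have hF1 : Fprod (α+2) β γ = Fprod (α+1) β γ * tterm β γ (α+2) := Fprod_succ _ _ _
  have hFs : Fprod (α+1) (β+1) (γ-1) = Fprod α (β+1) (γ-1) * tterm (β+1) (γ-1) (α+1) :=
    Fprod_succ _ _ _
  have hSne : ((2*(α:ℚ)+3-(γ:ℚ)) * ((β:ℚ)+(γ:ℚ)+(α:ℚ)+1)) ≠ 0 := by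
    have c1 : (0:ℚ) ≤ (β:ℚ)+(γ:ℚ) := by exact_mod_cast hβγ
    have c2 : (0:ℚ) ≤ (α:ℚ) := by positivity
    have cg : (γ:ℚ) ≤ 1 := by exact_mod_cast hγ
    have h1 : (0:ℚ) < (2*(α:ℚ)+3-(γ:ℚ)) := by linarith
    have h2 : (0:ℚ) < ((β:ℚ)+(γ:ℚ)+(α:ℚ)+1) := by linarith
    positivity
  by_cases hg1 : γ = 1
  · have gz : Fval (α+1) β (γ+1) = 0 := by
      rw [Fval, if_neg]
      rintro (⟨-, h2⟩ | h3)
      · omega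
      · omega
    rw [gz, zero_mul]
    have hc : (γ:ℚ) = 1 := by exact_mod_cast congrArg (fun z : ℤ => (z:ℚ)) hg1
    refine mul_right_cancel₀ hSne ?_
    linear_combination (Fprod α (β+1) (γ-1) * ((2*(α:ℚ)+3-(γ:ℚ)) * ((β:ℚ)+(γ:ℚ)+(α:ℚ)+1))) * hF1
      + (-(Fprod (α+1) β γ * ((2*(α:ℚ)+3-(γ:ℚ)) * ((β:ℚ)+(γ:ℚ)+(α:ℚ)+1)))) * hFs
      + (Fprod (α+1) β γ * Fprod α (β+1) (γ-1)) * hP3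
      + (Fprod (α+1) β γ * Fprod α (β+1) (γ-1) * tterm (β+1) (γ-1) (α+1)
          * ((β:ℚ)+(γ:ℚ))) * hc
  · have hγ0 : γ ≤ 0 := by omega
    by_cases h0 : (β:ℤ) + γ = 0
    · have gz : Fval (α+1) (β+1) (γ-2) = 0 := by
        rw [Fval, if_neg]
        rintro (⟨h1, -⟩ | h3)
        · push_cast at h1; omega
        · omega
      rw [gz, mul_zero]
      have hc : (β:ℚ) + (γ:ℚ) = 0 := by exact_mod_cast congrArg (fun z : ℤ => (z:ℚ)) h0
      refine mul_right_cancel₀ hSne ?_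
      linear_combination (Fprod α (β+1) (γ-1) * ((2*(α:ℚ)+3-(γ:ℚ)) * ((β:ℚ)+(γ:ℚ)+(α:ℚ)+1))) * hF1
        + (-(Fprod (α+1) β γ * ((2*(α:ℚ)+3-(γ:ℚ)) * ((β:ℚ)+(γ:ℚ)+(α:ℚ)+1)))) * hFs
        + (Fprod (α+1) β γ * Fprod α (β+1) (γ-1)) * hP3
        + (Fprod (α+1) β γ * Fprod α (β+1) (γ-1) * tterm (β+1) (γ-1) (α+1)
            * ((γ:ℚ)-1)) * hc
    · have h1 : 1 ≤ (β:ℤ)+γ := by omega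
      have g5 : Fval (α+1) β (γ+1) = Fprod (α+1) β (γ+1) :=
        if_pos (Or.inl ⟨by omega, by omega⟩)
      have g6 : Fval (α+1) (β+1) (γ-2) = Fprod (α+1) (β+1) (γ-2) :=
        if_pos (Or.inl ⟨by push_cast; omega, by omega⟩)
      rw [g5, g6]
      have htele := tele β γ hγ0 h1 (α+1)
      push_cast at htele
      refine mul_right_cancel₀ hSne ?_
      linear_combination (Fprod α (β+1) (γ-1) * ((2*(α:ℚ)+3-(γ:ℚ)) * ((β:ℚ)+(γ:ℚ)+(α:ℚ)+1))) * hF1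
        + htele
        + (Fprod (α+1) β γ * ((1-(γ:ℚ)) * ((β:ℚ)+(γ:ℚ))
            - (2*(α:ℚ)+3-(γ:ℚ)) * ((β:ℚ)+(γ:ℚ)+(α:ℚ)+1))) * hFs
        + (Fprod (α+1) β γ * Fprod α (β+1) (γ-1)) * hP3

end DetFam


namespace DetFam

def Dmat (α β : ℕ) (γ : ℤ) : Matrix (Fin α) (Fin α) ℚ :=
  Matrix.of fun i j : Fin α =>
    ibinom ((β : ℤ) + (j.1 + 1)) (2 * ((j.1 : ℤ) + 1) - ((i.1 : ℤ) + 1) - γ)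

lemma ibinom_zero_lt {n k : ℤ} (h : k < 0) : ibinom n k = 0 := if_neg (by omega)

lemma ibinom_zero_gt {n k : ℤ} (h : n < k) : ibinom n k = 0 := if_neg (by omega)

lemma det_Dmat_neg (α β : ℕ) (γ : ℤ) (hα : 1 ≤ α) (h : (β:ℤ) + γ < 0) :
    (Dmat α β γ).det = 0 := by
  have h0 : (Dmat α β γ).BlockTriangular OrderDual.toDual := by
    intro i j hij
    have hij' : (i : ℕ) < (j : ℕ) := hij
    apply ibinom_zero_gt
    omega
  rw [Matrix.det_of_lowerTriangular _ h0]
  refine Finset.prod_eq_zero (Finset.mem_univ (⟨0, hα⟩ : Fin α)) ?_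
  apply ibinom_zero_gt
  simp only [Dmat]
  omega

lemma det_Dmat_two (α β : ℕ) (γ : ℤ) (hα : 1 ≤ α) (h : 2 ≤ γ) :
    (Dmat α β γ).det = 0 := by
  apply Matrix.det_eq_zero_of_column_eq_zero (⟨0, hα⟩ : Fin α)
  intro i
  apply ibinom_zero_lt
  simp only [Dmat]
  omega

lemma sub_ss (n β : ℕ) (γ : ℤ) :
    (Dmat (n+2) β γ).submatrix Fin.succ Fin.succ = Dmat (n+1) (β+1) (γ-1) := by
  ext i j
  simp only [Dmat, Matrix.submatrix_apply, Matrix.of_apply, Fin.val_succ]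
  congr 1 <;> push_cast <;> ring

lemma sub_cc (n β : ℕ) (γ : ℤ) :
    (Dmat (n+2) β γ).submatrix Fin.castSucc Fin.castSucc = Dmat (n+1) β γ := by
  ext i j
  simp only [Dmat, Matrix.submatrix_apply, Matrix.of_apply, Fin.coe_castSucc]

lemma sub_sc (n β : ℕ) (γ : ℤ) :
    (Dmat (n+2) β γ).submatrix Fin.succ Fin.castSucc = Dmat (n+1) β (γ+1) := by
  ext i j
  simp only [Dmat, Matrix.submatrix_apply, Matrix.of_apply, Fin.val_succ, Fin.coe_castSucc]
  congr 1 <;> push_cast <;> ring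

lemma sub_cs (n β : ℕ) (γ : ℤ) :
    (Dmat (n+2) β γ).submatrix Fin.castSucc Fin.succ = Dmat (n+1) (β+1) (γ-2) := by
  ext i j
  simp only [Dmat, Matrix.submatrix_apply, Matrix.of_apply, Fin.val_succ, Fin.coe_castSucc]
  congr 1 <;> push_cast <;> ring

lemma sub_inner (n β : ℕ) (γ : ℤ) :
    (Dmat (n+2) β γ).submatrix (Fin.succ ∘ Fin.castSucc) (Fin.succ ∘ Fin.castSucc)
      = Dmat n (β+1) (γ-1) := by
  ext i j
  simp only [Dmat, Matrix.submatrix_apply, Matrix.of_apply, Function.comp_apply,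
    Fin.val_succ, Fin.coe_castSucc]
  congr 1 <;> push_cast <;> ring

lemma Dmat_zero (β : ℕ) (γ : ℤ) : (Dmat 0 β γ).det = Fval 0 β γ := by
  rw [Matrix.det_fin_zero, Fval, if_pos (Or.inr rfl)]
  unfold Fprod
  rw [show Finset.Icc 1 0 = (∅ : Finset ℕ) from rfl, Finset.prod_empty]

lemma Dmat_one (β : ℕ) (γ : ℤ) (hγ : γ ≤ 1) : (Dmat 1 β γ).det = Fval 1 β γ := by
  rw [Matrix.det_fin_one]
  show ibinom ((β : ℤ) + (((0:Fin 1).1 : ℤ) + 1))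
    (2 * (((0:Fin 1).1 : ℤ) + 1) - (((0:Fin 1).1 : ℤ) + 1) - γ) = _
  have hv : ((0:Fin 1).1 : ℤ) = 0 := rfl
  rw [hv]
  by_cases h : 0 ≤ (β:ℤ) + γ
  · rw [Fval, if_pos (Or.inl ⟨h, hγ⟩)]
    unfold Fprod
    rw [show Finset.Icc 1 1 = ({1} : Finset ℕ) from rfl, Finset.prod_singleton]
    unfold tterm
    rw [ibinom, if_pos (by constructor <;> omega)]
    have e1 : ((β:ℤ) + (0 + 1)).toNat = β + 1 := by omega
    have e2 : (2 * ((0:ℤ) + 1) - (0 + 1) - γ).toNat = (1 - γ).toNat := by omega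
    rw [e1, e2]
    have hk : (1 - γ).toNat ≤ β + 1 := by omega
    rw [Nat.cast_choose ℚ hk]
    have e3 : β + 1 - (1-γ).toNat = ((β:ℤ) + γ).toNat := by omega
    have e4 : (2 * ((1:ℕ):ℤ) - 1 - γ).toNat = (1 - γ).toNat := by omega
    have e5 : ((β:ℤ) + γ + ((1:ℕ):ℤ) - 1).toNat = ((β:ℤ) + γ).toNat := by omega
    rw [e3, e4, e5]
    have e6 : β + (1:ℕ) = β + 1 := rfl
    have e7 : ((1:ℕ) - 1).factorial = 1 := rfl
    rw [e7]
    have e8 : poch (2*(β:ℚ) + (γ:ℚ) + ((1:ℕ):ℚ) + 1) ((1:ℕ)-1) = 1 := by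
      rw [show (1:ℕ) - 1 = 0 from rfl]
      simp [poch]
    rw [e8]
    push_cast
    ring
  · have hguard : ¬ ((0 ≤ (β:ℤ) + γ ∧ γ ≤ 1) ∨ (1:ℕ) = 0) := by
      rintro (⟨h1, -⟩ | h2)
      · exact h h1
      · exact one_ne_zero h2
    rw [Fval, if_neg hguard]
    apply ibinom_zero_gt
    omega

theorem Dmat_det : ∀ (α β : ℕ) (γ : ℤ), γ ≤ 1 → (Dmat α β γ).det = Fval α β γ := by
  intro α
  induction α using Nat.strong_induction_on with
  | _ α IH =>
    match α with
    | 0 => exact fun β γ _ => Dmat_zero β γ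
    | 1 => exact fun β γ hγ => Dmat_one β γ hγ
    | (n+2) =>
      intro β γ hγ
      by_cases hneg : (β:ℤ) + γ < 0
      · rw [det_Dmat_neg _ _ _ (by omega) hneg, Fval, if_neg]
        rintro (⟨h1, -⟩ | h2)
        · omega
        · omega
      · push_neg at hneg
        have hDJ := DJ.desnanot_jacobi (Dmat (n+2) β γ)
        rw [sub_ss, sub_cc, sub_sc, sub_cs, sub_inner] at hDJ
        rw [IH (n+1) (by omega) (β+1) (γ-1) (by omega), IH (n+1) (by omega) β γ hγ,
            IH (n+1) (by omega) (β+1) (γ-2) (by omega),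
            IH n (by omega) (β+1) (γ-1) (by omega)] at hDJ
        have hmid : (Dmat (n+1) β (γ+1)).det = Fval (n+1) β (γ+1) := by
          by_cases hg : γ + 1 ≤ 1
          · exact IH (n+1) (by omega) β (γ+1) hg
          · rw [det_Dmat_two _ _ _ (by omega) (by omega), Fval, if_neg]
            rintro (⟨-, h2⟩ | h3)
            · omega
            · omega
        rw [hmid] at hDJ
        have hsc := scalar_identity n β γ hγ hneg
        have hne : Fval n (β+1) (γ-1) ≠ 0 := by
          rw [Fval, if_pos (Or.inl ⟨by push_cast; omega, by omega⟩)]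
          exact (Fprod_pos (by omega) (by push_cast; omega)).ne'
        exact mul_right_cancel₀ hne (hDJ.trans hsc.symm)

end DetFam


theorem stmt0 (α β γ : ℕ) (hα : 1 ≤ α) (hγ : γ = 0 ∨ γ = 1) :
    (Matrix.of fun i j : Fin α =>
        ibinom ((β : ℤ) + (j.1 + 1)) (2 * ((j.1 : ℤ) + 1) - ((i.1 : ℤ) + 1) - (γ : ℤ))).det
    = ∏ j ∈ Finset.Icc 1 α,
        ((Nat.factorial (β + j) : ℚ) * (Nat.factorial (j - 1) : ℚ) *
          poch ((2 * β + γ + j + 1 : ℕ) : ℚ) (j - 1)) /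
        ((Nat.factorial (2 * j - 1 - γ) : ℚ) * (Nat.factorial (β + γ + j - 1) : ℚ)) := by
  have hγ1 : (γ:ℤ) ≤ 1 := by rcases hγ with rfl | rfl <;> norm_num
  have hm : (Matrix.of fun i j : Fin α =>
      ibinom ((β : ℤ) + (j.1 + 1)) (2 * ((j.1 : ℤ) + 1) - ((i.1 : ℤ) + 1) - (γ : ℤ)))
      = DetFam.Dmat α β (γ:ℤ) := rfl
  rw [hm, DetFam.Dmat_det α β (γ:ℤ) hγ1, DetFam.Fval,
    if_pos (Or.inl ⟨by positivity, hγ1⟩)]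
  unfold DetFam.Fprod
  refine Finset.prod_congr rfl fun j hj => ?_
  have hj1 : 1 ≤ j := (Finset.mem_Icc.mp hj).1
  unfold DetFam.tterm
  have e1 : (2 * (j:ℤ) - 1 - (γ:ℤ)).toNat = 2 * j - 1 - γ := by
    rcases hγ with rfl | rfl <;> omega
  have e2 : ((β:ℤ) + (γ:ℤ) + (j:ℤ) - 1).toNat = β + γ + j - 1 := by omega
  have e3 : poch (2*(β:ℚ) + (((γ:ℤ)):ℚ) + (j:ℚ) + 1) (j-1)
      = poch ((2 * β + γ + j + 1 : ℕ) : ℚ) (j-1) := by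
    congr 1
    push_cast
    ring
  rw [e1, e2, e3]
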